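/- Let a < b be real numbers. Then for every x ∈ ℝ, lim_{ε→0⁺} ∫_a^b erf((x − s)/(√2 ε)) ds = |x − a| − |x − b|, where erf(x) = (2/√π) ∫₀ˣ exp(−t²) dt. -/

import Mathlib

/-- The error function `erf x = (2/√π) ∫₀ˣ exp(−t²) dt`. -/
noncomputable def erf (x : ℝ) : ℝ :=
  (2 / Real.sqrt Real.pi) * ∫ t in (0 : ℝ)..x, Real.exp (-t ^ 2)

open MeasureTheory Filter Set intervalIntegral

lemma gauss_cont : Continuous fun t : ℝ => Real.exp (-t ^ 2) := by continuity

lemma erf_continuous : Continuous erf := by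
  unfold erf
  exact continuous_const.mul
    (intervalIntegral.continuous_primitive (fun a b => gauss_cont.intervalIntegrable a b) 0)

lemma erf_neg (y : ℝ) : erf (-y) = - erf y := by
  unfold erf
  rw [← mul_neg]
  congr 1
  have h := intervalIntegral.integral_comp_neg (a := (0:ℝ)) (b := y)
    (fun t => Real.exp (-t ^ 2))
  simp only [neg_neg, neg_sq, neg_zero] at h ⊢
  rw [h]
  exact intervalIntegral.integral_symm (-y) 0

lemma gauss_Ioi : ∫ t in Ioi (0:ℝ), Real.exp (-t ^ 2) = Real.sqrt Real.pi / 2 := by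
  have := integral_gaussian_Ioi 1
  simpa using this

lemma gauss_integrableOn : IntegrableOn (fun t : ℝ => Real.exp (-t ^ 2)) (Ioi 0) := by
  have := (integrable_exp_neg_mul_sq (one_pos)).integrableOn (s := Ioi (0:ℝ))
  simpa using this

lemma erf_nonneg {y : ℝ} (hy : 0 ≤ y) : 0 ≤ erf y := by
  unfold erf
  apply mul_nonneg (by positivity)
  apply intervalIntegral.integral_nonneg hy
  intro t _; positivity

lemma erf_le_one {y : ℝ} (hy : 0 ≤ y) : erf y ≤ 1 := by
  have h1 : ∫ t in (0:ℝ)..y, Real.exp (-t ^ 2) ≤ Real.sqrt Real.pi / 2 := by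
    rw [intervalIntegral.integral_of_le hy, ← gauss_Ioi]
    apply setIntegral_mono_set gauss_integrableOn
    · filter_upwards with t using by positivity
    · exact Filter.Eventually.of_forall Ioc_subset_Ioi_self
  have hπ : 0 < Real.sqrt Real.pi := Real.sqrt_pos.2 Real.pi_pos
  calc erf y ≤ (2 / Real.sqrt Real.pi) * (Real.sqrt Real.pi / 2) :=
        mul_le_mul_of_nonneg_left h1 (by positivity)
    _ = 1 := by field_simp
 
lemma abs_erf_le_one (y : ℝ) : |erf y| ≤ 1 := by
  rcases le_or_gt 0 y with hy | hy
  · rw [abs_of_nonneg (erf_nonneg hy)]; exact erf_le_one hy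
  · have : erf y = - erf (-y) := by rw [erf_neg, neg_neg]
    rw [this, abs_neg, abs_of_nonneg (erf_nonneg (by linarith))]
    exact erf_le_one (by linarith)

lemma erf_tendsto_atTop : Tendsto erf atTop (nhds 1) := by
  have h1 : Tendsto (fun y : ℝ => ∫ t in (0:ℝ)..y, Real.exp (-t ^ 2)) atTop
      (nhds (∫ t in Ioi (0:ℝ), Real.exp (-t ^ 2))) :=
    intervalIntegral_tendsto_integral_Ioi 0 gauss_integrableOn tendsto_id
  rw [gauss_Ioi] at h1
  have h2 := h1.const_mul (2 / Real.sqrt Real.pi)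
  have hπ : 0 < Real.sqrt Real.pi := Real.sqrt_pos.2 Real.pi_pos
  have : 2 / Real.sqrt Real.pi * (Real.sqrt Real.pi / 2) = 1 := by field_simp
  rw [this] at h2
  exact h2

lemma erf_scaled_tendsto_pos {y : ℝ} (hy : 0 < y) :
    Tendsto (fun ε : ℝ => erf (y / (Real.sqrt 2 * ε))) (nhdsWithin 0 (Set.Ioi 0))
      (nhds 1) := by
  have harg : Tendsto (fun ε : ℝ => y / (Real.sqrt 2 * ε)) (nhdsWithin 0 (Set.Ioi 0)) atTop := by
    have h2 : (0:ℝ) < y / Real.sqrt 2 := by positivity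
    have := tendsto_inv_nhdsGT_zero.const_mul_atTop h2
    refine this.congr fun ε => ?_
    ring
  exact erf_tendsto_atTop.comp harg

lemma erf_scaled_tendsto_neg {y : ℝ} (hy : y < 0) :
    Tendsto (fun ε : ℝ => erf (y / (Real.sqrt 2 * ε))) (nhdsWithin 0 (Set.Ioi 0))
      (nhds (-1)) := by
  have h := (erf_scaled_tendsto_pos (y := -y) (by linarith)).neg
  refine h.congr fun ε => ?_
  rw [neg_div, erf_neg, neg_neg]

/-- For `a < b` and every `x ∈ ℝ`,
`lim_{ε→0⁺} ∫_a^b erf((x − s)/(√2 ε)) ds = |x − a| − |x − b|`. -/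
theorem integral_erf_tendsto_abs_sub
    (a b : ℝ) (hab : a < b) (x : ℝ) :
    Filter.Tendsto
      (fun ε : ℝ => ∫ s in a..b, erf ((x - s) / (Real.sqrt 2 * ε)))
      (nhdsWithin 0 (Set.Ioi 0))
      (nhds (|x - a| - |x - b|)) := by
  set f : ℝ → ℝ := fun s => if s < x then 1 else -1 with hf
  have hfm : Measurable f := by
    apply Measurable.piecewise measurableSet_Iio measurable_const measurable_const
  have hfb : ∀ s, |f s| ≤ 1 := by
    intro s; by_cases h : s < x <;> simp [hf, h]
  have hfint : ∀ c d : ℝ, IntervalIntegrable f volume c d := by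
    intro c d
    rw [intervalIntegrable_iff]
    apply MeasureTheory.Measure.integrableOn_of_bounded (M := 1)
    · exact (measure_Ioc_lt_top).ne
    · exact hfm.stronglyMeasurable.aestronglyMeasurable
    · exact Filter.Eventually.of_forall fun s => by simpa using hfb s
  have key : Tendsto (fun ε : ℝ => ∫ s in a..b, erf ((x - s) / (Real.sqrt 2 * ε)))
      (nhdsWithin 0 (Set.Ioi 0)) (nhds (∫ s in a..b, f s)) := by
    apply intervalIntegral.tendsto_integral_filter_of_dominated_convergence (bound := fun _ => 1)
    · filter_upwards with ε
      exact ((erf_continuous.comp (by continuity)).stronglyMeasurable.aestronglyMeasurable).restrict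
    · filter_upwards with ε
      filter_upwards with s _
      simpa using abs_erf_le_one _
    · exact intervalIntegrable_const
    · have hx : ∀ᵐ s : ℝ, s ≠ x := by
        have : (volume : Measure ℝ) {x} = 0 := Real.volume_singleton
        filter_upwards [measure_eq_zero_iff_ae_notMem.mp this] with s hs
        exact hs
      filter_upwards [hx] with s hs _
      rcases lt_or_gt_of_ne hs with h | h
      · have : f s = 1 := by simp [hf, h]
        rw [this]
        exact erf_scaled_tendsto_pos (by linarith : (0:ℝ) < x - s)
      · have : f s = -1 := by simp [hf, not_lt.2 h.le]
        rw [this]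
        exact erf_scaled_tendsto_neg (by linarith : x - s < 0)
  have hval : (∫ s in a..b, f s) = |x - a| - |x - b| := by
    rcases le_or_gt x a with hxa | hxa
    · have : ∫ s in a..b, f s = ∫ s in a..b, (-1 : ℝ) := by
        apply intervalIntegral.integral_congr_ae
        filter_upwards with s hs
        rw [Set.uIoc_of_le hab.le] at hs
        simp [hf, not_lt.2 (hxa.trans hs.1.le)]
      rw [this, intervalIntegral.integral_const, abs_of_nonpos (by linarith),
        abs_of_nonpos (by linarith)]
      ring_nf
    rcases le_or_gt b x with hbx | hbx
    · have : ∫ s in a..b, f s = ∫ s in a..b, (1 : ℝ) := by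
        apply intervalIntegral.integral_congr_ae
        have hx : ∀ᵐ s : ℝ, s ≠ x := by
          filter_upwards [measure_eq_zero_iff_ae_notMem.mp (Real.volume_singleton (a := x))] with s hs
          exact hs
        filter_upwards [hx] with s hs hmem
        rw [Set.uIoc_of_le hab.le] at hmem
        have : s < x := lt_of_le_of_ne (hmem.2.trans hbx) hs
        simp [hf, this]
      rw [this, intervalIntegral.integral_const, abs_of_nonneg (by linarith),
        abs_of_nonneg (by linarith)]
      simp [smul_eq_mul]
    · -- a < x < b
      have hsplit : (∫ s in a..x, f s) + (∫ s in x..b, f s) = ∫ s in a..b, f s :=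
        intervalIntegral.integral_add_adjacent_intervals (hfint a x) (hfint x b)
      have h1 : (∫ s in a..x, f s) = x - a := by
        have : ∫ s in a..x, f s = ∫ s in a..x, (1 : ℝ) := by
          apply intervalIntegral.integral_congr_ae
          have hx : ∀ᵐ s : ℝ, s ≠ x := by
            filter_upwards [measure_eq_zero_iff_ae_notMem.mp (Real.volume_singleton (a := x))] with s hs
            exact hs
          filter_upwards [hx] with s hs hmem
          rw [Set.uIoc_of_le hxa.le] at hmem
          simp [hf, lt_of_le_of_ne hmem.2 hs]
        rw [this, intervalIntegral.integral_const]; simp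
      have h2 : (∫ s in x..b, f s) = -(b - x) := by
        have : ∫ s in x..b, f s = ∫ s in x..b, (-1 : ℝ) := by
          apply intervalIntegral.integral_congr_ae
          filter_upwards with s hmem
          rw [Set.uIoc_of_le hbx.le] at hmem
          simp [hf, not_lt.2 hmem.1.le]
        rw [this, intervalIntegral.integral_const]; simp
      rw [← hsplit, h1, h2, abs_of_nonneg (by linarith), abs_of_nonpos (by linarith)]
      ring
  rwa [hval] at key
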